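/- arXiv:1711.03937 — 3 statements merged into one kernel-verified Lean document; each statement's English description precedes it below -/
import Mathlib

section
/- Suppose each composite map φ_i(x) = F_i(G(x)) is convex with gradient ∇φ_i(x) = (∇G(x))ᵀ∇F_i(G(x)) that is L_f-Lipschitz in x, let h : ℝ^N → ℝ be convex, and let x* be a minimizer of H(x) = (1/n₁)∑_i F_i(G(x)) + h(x). Then for all x ∈ ℝ^N, (1/n₁)·∑_{i=1}^{n₁} ‖(∇G(x))ᵀ∇F_i(G(x)) − (∇G(x*))ᵀ∇F_i(G(x*))‖² ≤ 2L_f·(H(x) − H(x*)). -/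
open scoped BigOperators RealInnerProductSpace
open Finset

noncomputable section

/-- ℝ^N as a Euclidean (inner product) space. -/
abbrev En (N : ℕ) : Type := EuclideanSpace ℝ (Fin N)

/-- Hilbert–Schmidt (Frobenius) norm of a continuous linear map between Euclidean spaces. -/
def hsNorm {N M : ℕ} (T : En N →L[ℝ] En M) : ℝ :=
  Real.sqrt (∑ j : Fin N, ‖T (EuclideanSpace.single j 1)‖ ^ 2)

/-- G(x) = (1/n₂) ∑ⱼ Gⱼ(x). -/
def Gbar {N M n₂ : ℕ} (Gf : Fin n₂ → En N → En M) (x : En N) : En M :=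
  (n₂ : ℝ)⁻¹ • ∑ j, Gf j x

/-- ∇G(x) = (1/n₂) ∑ⱼ ∇Gⱼ(x). -/
def DGbar {N M n₂ : ℕ} (Gf : Fin n₂ → En N → En M) (x : En N) : En N →L[ℝ] En M :=
  (n₂ : ℝ)⁻¹ • ∑ j, fderiv ℝ (Gf j) x

/-- f(x) = (1/n₁) ∑ᵢ Fᵢ(G(x)). -/
def fComp {N M n₁ n₂ : ℕ} (F : Fin n₁ → En M → ℝ) (Gf : Fin n₂ → En N → En M) (x : En N) : ℝ :=
  (n₁ : ℝ)⁻¹ * ∑ i, F i (Gbar Gf x)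

/-- ∇f(x) = (∇G(x))ᵀ ((1/n₁) ∑ᵢ ∇Fᵢ(G(x))). -/
def gradf {N M n₁ n₂ : ℕ} (F : Fin n₁ → En M → ℝ) (Gf : Fin n₂ → En N → En M) (x : En N) :
    En N :=
  ContinuousLinearMap.adjoint (DGbar Gf x) ((n₁ : ℝ)⁻¹ • ∑ i, gradient (F i) (Gbar Gf x))

/-- Ĝ(a) = G(x̃) − (1/A) ∑ₖ (G_{aₖ}(x̃) − G_{aₖ}(x)). -/
def Ghat {N M n₂ A : ℕ} (Gf : Fin n₂ → En N → En M) (x xt : En N) (a : Fin A → Fin n₂) :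
    En M :=
  Gbar Gf xt - (A : ℝ)⁻¹ • ∑ k, (Gf (a k) xt - Gf (a k) x)

/-- D̂(b) = ∇G(x̃) − (1/B) ∑ₖ (∇G_{bₖ}(x̃) − ∇G_{bₖ}(x)). -/
def Dhat {N M n₂ B : ℕ} (Gf : Fin n₂ → En N → En M) (x xt : En N) (b : Fin B → Fin n₂) :
    En N →L[ℝ] En M :=
  DGbar Gf xt - (B : ℝ)⁻¹ • ∑ k, (fderiv ℝ (Gf (b k)) xt - fderiv ℝ (Gf (b k)) x)

/-- The VRSC-PG gradient estimator v(ι,a,b). -/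
def vEst {N M n₁ n₂ b₁ A B : ℕ} (F : Fin n₁ → En M → ℝ) (Gf : Fin n₂ → En N → En M)
    (x xt : En N) (ι : Fin b₁ → Fin n₁) (a : Fin A → Fin n₂) (b : Fin B → Fin n₂) : En N :=
  (b₁ : ℝ)⁻¹ • ∑ k,
      (ContinuousLinearMap.adjoint (Dhat Gf x xt b) (gradient (F (ι k)) (Ghat Gf x xt a))
        - ContinuousLinearMap.adjoint (DGbar Gf xt) (gradient (F (ι k)) (Gbar Gf xt)))
    + gradf F Gf xt

/-- Sample space for one iteration: an index tuple (ι, a, b). -/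
abbrev Tup (n₁ n₂ b₁ A B : ℕ) : Type :=
  (Fin b₁ → Fin n₁) × (Fin A → Fin n₂) × (Fin B → Fin n₂)

end

section Helpers
variable {N : ℕ}

lemma curve_deriv {φ : En N → ℝ} {g : En N} (x d : En N) (t : ℝ)
    (hg : HasGradientAt φ g (x + t • d)) :
    HasDerivAt (fun s : ℝ => φ (x + s • d)) ⟪g, d⟫ t := by
  have hline : HasDerivAt (fun s : ℝ => x + s • d) d t := by
    simpa using ((hasDerivAt_id t).smul_const d).const_add x
  have := (hasGradientAt_iff_hasFDerivAt.mp hg).comp_hasDerivAt t hline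
  simp at this; exact this

lemma grad_ineq' {φ : En N → ℝ} {g : En N → En N} (hconv : ConvexOn ℝ Set.univ φ)
    (hg : ∀ z, HasGradientAt φ (g z) z) (x y : En N) :
    φ x + ⟪g x, y - x⟫ ≤ φ y := by
  have hψ : ConvexOn ℝ Set.univ (fun t : ℝ => φ (x + t • (y - x))) := by
    have h1 := hconv.comp_affineMap (AffineMap.lineMap x y)
    simp only [Set.preimage_univ] at h1
    have h2 : (φ ∘ ⇑(AffineMap.lineMap x y)) = fun t : ℝ => φ (x + t • (y - x)) := by
      funext t
      show φ _ = φ _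
      congr 1
      simp [AffineMap.lineMap_apply]
      module
    rwa [h2] at h1
  have hd : HasDerivAt (fun t : ℝ => φ (x + t • (y - x))) ⟪g (x + (0:ℝ) • (y - x)), y - x⟫ 0 :=
    curve_deriv x (y - x) 0 (hg _)
  have h3 := hψ.le_slope_of_hasDerivAt (Set.mem_univ (0:ℝ)) (Set.mem_univ (1:ℝ)) one_pos hd
  simp only [slope_def_field, div_one, zero_smul, add_zero, one_smul] at h3 ⊢
  have hxy : x + (y - x) = y := by abel
  rw [hxy] at h3
  linarith [h3]

lemma descent' {φ : En N → ℝ} {g : En N → En N}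
    (hg : ∀ z, HasGradientAt φ (g z) z) {L : ℝ} (hL : 0 ≤ L)
    (hlip : ∀ a b, ‖g a - g b‖ ≤ L * ‖a - b‖) (x y : En N) :
    φ y ≤ φ x + ⟪g x, y - x⟫ + L / 2 * ‖y - x‖ ^ 2 := by
  set d := y - x with hd
  have hgc : Continuous g := by
    have : LipschitzWith (Real.toNNReal L) g := by
      apply LipschitzWith.of_dist_le_mul
      intro a b
      rw [dist_eq_norm, dist_eq_norm]
      simpa [Real.coe_toNNReal L hL] using hlip a b
    exact this.continuous
  have hcont : Continuous fun t : ℝ => ⟪g (x + t • d), d⟫ := by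
    apply Continuous.inner
    · exact hgc.comp (by continuity)
    · exact continuous_const
  have hFTC : φ (x + (1:ℝ) • d) - φ (x + (0:ℝ) • d) = ∫ t in (0:ℝ)..1, ⟪g (x + t • d), d⟫ := by
    refine (intervalIntegral.integral_eq_sub_of_hasDerivAt (f := fun t => φ (x + t • d)) (fun t _ => ?_)
      (hcont.intervalIntegrable 0 1)).symm
    exact curve_deriv x d t (hg _)
  have hmono : (∫ t in (0:ℝ)..1, ⟪g (x + t • d), d⟫)
      ≤ ∫ t in (0:ℝ)..1, (⟪g x, d⟫ + L * ‖d‖ ^ 2 * t) := by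
    apply intervalIntegral.integral_mono_on (by norm_num) (hcont.intervalIntegrable 0 1)
      ((Continuous.intervalIntegrable (by continuity) 0 1))
    intro t ht
    have h1 : ⟪g (x + t • d) - g x, d⟫ ≤ ‖g (x + t • d) - g x‖ * ‖d‖ :=
      real_inner_le_norm _ _
    have h2 : ‖g (x + t • d) - g x‖ ≤ L * (t * ‖d‖) := by
      have := hlip (x + t • d) x
      simpa [norm_smul, abs_of_nonneg ht.1] using this
    have h3 : ⟪g (x + t • d) - g x, d⟫ ≤ L * ‖d‖ ^ 2 * t := by
      calc ⟪g (x + t • d) - g x, d⟫ ≤ ‖g (x + t • d) - g x‖ * ‖d‖ := h1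
        _ ≤ L * (t * ‖d‖) * ‖d‖ := by
            apply mul_le_mul_of_nonneg_right h2 (norm_nonneg _)
        _ = L * ‖d‖ ^ 2 * t := by ring
    rw [inner_sub_left] at h3
    linarith
  have hval : (∫ t in (0:ℝ)..1, (⟪g x, d⟫ + L * ‖d‖ ^ 2 * t))
      = ⟪g x, d⟫ + L / 2 * ‖d‖ ^ 2 := by
    rw [intervalIntegral.integral_add (intervalIntegrable_const)
      (Continuous.intervalIntegrable (by fun_prop : Continuous fun t : ℝ => L * ‖d‖ ^ 2 * t) 0 1)]
    rw [intervalIntegral.integral_const_mul, integral_id]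
    simp
    ring
  have : φ (x + (1:ℝ) • d) - φ (x + (0:ℝ) • d) ≤ ⟪g x, d⟫ + L / 2 * ‖d‖ ^ 2 := by
    rw [hFTC]; rw [hval] at hmono; exact hmono
  have hx1 : x + (1:ℝ) • d = y := by rw [hd]; simp
  have hx0 : x + (0:ℝ) • d = x := by simp
  rw [hx1, hx0] at this
  linarith

lemma cocoercive' {φ : En N → ℝ} {g : En N → En N} (hconv : ConvexOn ℝ Set.univ φ)
    (hg : ∀ z, HasGradientAt φ (g z) z) {L : ℝ} (hL : 0 < L)
    (hlip : ∀ a b, ‖g a - g b‖ ≤ L * ‖a - b‖) (x y : En N) :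
    ‖g x - g y‖ ^ 2 ≤ 2 * L * (φ x - φ y - ⟪g y, x - y⟫) := by
  set u := g x - g y with hu
  set z := x - L⁻¹ • u with hz
  have h1 : φ y + ⟪g y, z - y⟫ ≤ φ z := grad_ineq' hconv hg y z
  have h2 : φ z ≤ φ x + ⟪g x, z - x⟫ + L / 2 * ‖z - x‖ ^ 2 :=
    descent' hg hL.le hlip x z
  have hzx : z - x = -(L⁻¹ • u) := by rw [hz]; abel
  have hzy : z - y = (x - y) - L⁻¹ • u := by rw [hz]; abel
  have e1 : ⟪g x, z - x⟫ = -(L⁻¹ * ⟪g x, u⟫) := by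
    rw [hzx, inner_neg_right, real_inner_smul_right]
  have e2 : ⟪g y, z - y⟫ = ⟪g y, x - y⟫ - L⁻¹ * ⟪g y, u⟫ := by
    rw [hzy, inner_sub_right, real_inner_smul_right]
  have e3 : ‖z - x‖ ^ 2 = L⁻¹ ^ 2 * ‖u‖ ^ 2 := by
    rw [hzx, norm_neg, norm_smul]
    rw [Real.norm_eq_abs, abs_of_pos (inv_pos.mpr hL)]
    ring
  have e4 : ⟪g x, u⟫ - ⟪g y, u⟫ = ‖u‖ ^ 2 := by
    rw [← inner_sub_left, ← hu, real_inner_self_eq_norm_sq]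
  have hL' : L ≠ 0 := hL.ne'
  rw [e1] at h2; rw [e2] at h1; rw [e3] at h2
  have e5 : L⁻¹ * ⟪g x, u⟫ - L⁻¹ * ⟪g y, u⟫ = L⁻¹ * ‖u‖ ^ 2 := by
    rw [← mul_sub, e4]
  have key : L⁻¹ * ‖u‖ ^ 2 - L / 2 * (L⁻¹ ^ 2 * ‖u‖ ^ 2) ≤ φ x - φ y - ⟪g y, x - y⟫ := by
    linarith [h1, h2, e5]
  have : L⁻¹ * ‖u‖ ^ 2 - L / 2 * (L⁻¹ ^ 2 * ‖u‖ ^ 2) = ‖u‖ ^ 2 / (2 * L) := by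
    field_simp; ring
  rw [this] at key
  rw [div_le_iff₀ (by positivity)] at key
  linarith [key]

lemma min_ineq' {f h : En N → ℝ} {gf : En N} {xs : En N}
    (hh : ConvexOn ℝ Set.univ h)
    (hgf : HasGradientAt f gf xs)
    (hmin : ∀ z, f xs + h xs ≤ f z + h z) (x : En N) :
    0 ≤ ⟪gf, x - xs⟫ + (h x - h xs) := by
  set d := x - xs with hd
  have hψ : HasDerivAt (fun t : ℝ => f (xs + t • d)) ⟪gf, d⟫ 0 := by
    have := curve_deriv xs d 0 (by simpa using hgf)
    exact this
  have htend : Filter.Tendsto (slope (fun t : ℝ => f (xs + t • d)) 0) (nhdsWithin 0 (Set.Ioi 0))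
      (nhds ⟪gf, d⟫) :=
    (hasDerivAt_iff_tendsto_slope.mp hψ).mono_left
      (nhdsWithin_mono 0 (fun t ht => Set.mem_compl_singleton_iff.mpr (ne_of_gt ht)))
  have hev : ∀ᶠ t in nhdsWithin (0:ℝ) (Set.Ioi 0),
      -(h x - h xs) ≤ slope (fun t : ℝ => f (xs + t • d)) 0 t := by
    filter_upwards [Ioc_mem_nhdsGT_of_mem (Set.left_mem_Ico.mpr one_pos)] with t ht
    have ht0 : 0 < t := ht.1
    have ht1 : t ≤ 1 := ht.2
    have hhc : h (xs + t • d) ≤ (1 - t) * h xs + t * h x := by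
      have := hh.2 (Set.mem_univ xs) (Set.mem_univ x)
        (show (0:ℝ) ≤ 1 - t by linarith) ht0.le (by ring : (1 - t) + t = 1)
      have harg : (1 - t) • xs + t • x = xs + t • d := by
        rw [hd]; module
      rwa [harg, smul_eq_mul, smul_eq_mul] at this
    have hm := hmin (xs + t • d)
    have hslope : slope (fun t : ℝ => f (xs + t • d)) 0 t
        = (f (xs + t • d) - f xs) / t := by
      simp [slope_def_field]
    rw [hslope, le_div_iff₀ ht0]
    nlinarith [hhc, hm]
  have := ge_of_tendsto htend hev
  linarith [this]

end Helpers

/-- bound on the averaged squared deviation of the composite component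
gradients from their values at a minimizer of H. -/
theorem composite_gradient_deviation_bound
    (N M n₁ n₂ : ℕ) (hn₁ : 0 < n₁) (hn₂ : 0 < n₂)
    (F : Fin n₁ → En M → ℝ) (Gf : Fin n₂ → En N → En M)
    (hF : ∀ i, ContDiff ℝ 1 (F i)) (hGf : ∀ j, ContDiff ℝ 1 (Gf j))
    (h : En N → ℝ) (hconv : ConvexOn ℝ Set.univ h)
    (L_f : ℝ) (hLf : 0 < L_f)
    -- each composite map φᵢ = Fᵢ ∘ G is convex ...
    (hφconv : ∀ i, ConvexOn ℝ Set.univ (fun x : En N => F i (Gbar Gf x)))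
    -- ... with gradient ∇φᵢ(x) = (∇G(x))ᵀ∇Fᵢ(G(x)) ...
    (hφgrad : ∀ (i : Fin n₁) (x : En N),
      HasGradientAt (fun z : En N => F i (Gbar Gf z))
        (ContinuousLinearMap.adjoint (DGbar Gf x) (gradient (F i) (Gbar Gf x))) x)
    -- ... that is L_f-Lipschitz
    (hφlip : ∀ (i : Fin n₁) (x y : En N),
      ‖ContinuousLinearMap.adjoint (DGbar Gf x) (gradient (F i) (Gbar Gf x))
        - ContinuousLinearMap.adjoint (DGbar Gf y) (gradient (F i) (Gbar Gf y))‖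
        ≤ L_f * ‖x - y‖)
    -- x* is a minimizer of H = (1/n₁)∑ᵢ Fᵢ(G(·)) + h
    (xstar : En N)
    (hmin : ∀ z : En N, fComp F Gf xstar + h xstar ≤ fComp F Gf z + h z) :
    ∀ x : En N,
      (n₁ : ℝ)⁻¹ * ∑ i : Fin n₁,
          ‖ContinuousLinearMap.adjoint (DGbar Gf x) (gradient (F i) (Gbar Gf x))
            - ContinuousLinearMap.adjoint (DGbar Gf xstar)
                (gradient (F i) (Gbar Gf xstar))‖ ^ 2
        ≤ 2 * L_f * ((fComp F Gf x + h x) - (fComp F Gf xstar + h xstar)) := by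
  intro x
  set g : Fin n₁ → En N → En N := fun i z =>
    ContinuousLinearMap.adjoint (DGbar Gf z) (gradient (F i) (Gbar Gf z)) with hgdef
  have hco : ∀ i, ‖g i x - g i xstar‖ ^ 2
      ≤ 2 * L_f * (F i (Gbar Gf x) - F i (Gbar Gf xstar) - ⟪g i xstar, x - xstar⟫) := by
    intro i
    exact cocoercive' (hφconv i) (hφgrad i) hLf (hφlip i) x xstar
  -- gradient of fComp at xstar
  have hgradf : HasGradientAt (fComp F Gf) ((n₁ : ℝ)⁻¹ • ∑ i, g i xstar) xstar := by
    have hsumF : HasFDerivAt (fun z => ∑ i, F i (Gbar Gf z))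
        (∑ i, (InnerProductSpace.toDual ℝ (En N)) (g i xstar)) xstar :=
      HasFDerivAt.fun_sum (fun i _ => hasGradientAt_iff_hasFDerivAt.mp (hφgrad i xstar))
    have hsm := hsumF.const_smul ((n₁ : ℝ)⁻¹)
    have heq : ((n₁ : ℝ)⁻¹ • fun z => ∑ i, F i (Gbar Gf z)) = fComp F Gf := by
      funext z; simp [fComp, smul_eq_mul]
    rw [heq] at hsm
    rw [hasGradientAt_iff_hasFDerivAt]
    simpa [map_sum] using hsm
  have hopt := min_ineq' hconv hgradf hmin x
  have hinner : ⟪(n₁ : ℝ)⁻¹ • ∑ i, g i xstar, x - xstar⟫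
      = (n₁ : ℝ)⁻¹ * ∑ i, ⟪g i xstar, x - xstar⟫ := by
    rw [real_inner_smul_left, sum_inner]
  have hsum : ∑ i, ‖g i x - g i xstar‖ ^ 2
      ≤ 2 * L_f * ((∑ i, F i (Gbar Gf x)) - (∑ i, F i (Gbar Gf xstar))
          - ∑ i, ⟪g i xstar, x - xstar⟫) := by
    calc ∑ i, ‖g i x - g i xstar‖ ^ 2
        ≤ ∑ i, 2 * L_f * (F i (Gbar Gf x) - F i (Gbar Gf xstar) - ⟪g i xstar, x - xstar⟫) :=
          sum_le_sum fun i _ => hco i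
      _ = _ := by rw [← mul_sum]; congr 1; rw [sum_sub_distrib, sum_sub_distrib]
  have hn₁' : (0:ℝ) < (n₁ : ℝ)⁻¹ := by positivity
  have step : (n₁ : ℝ)⁻¹ * ∑ i, ‖g i x - g i xstar‖ ^ 2
      ≤ 2 * L_f * (fComp F Gf x - fComp F Gf xstar
          - ⟪(n₁ : ℝ)⁻¹ • ∑ i, g i xstar, x - xstar⟫) := by
    have := mul_le_mul_of_nonneg_left hsum hn₁'.le
    calc (n₁ : ℝ)⁻¹ * ∑ i, ‖g i x - g i xstar‖ ^ 2 ≤ _ := this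
      _ = 2 * L_f * (fComp F Gf x - fComp F Gf xstar
          - ⟪(n₁ : ℝ)⁻¹ • ∑ i, g i xstar, x - xstar⟫) := by
          rw [hinner]; simp only [fComp]; ring
  have final : 2 * L_f * (fComp F Gf x - fComp F Gf xstar
      - ⟪(n₁ : ℝ)⁻¹ • ∑ i, g i xstar, x - xstar⟫)
      ≤ 2 * L_f * ((fComp F Gf x + h x) - (fComp F Gf xstar + h xstar)) := by
    apply mul_le_mul_of_nonneg_left _ (by positivity : (0:ℝ) ≤ 2 * L_f)
    linarith [hopt]
  exact le_trans step final
end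

section
/- Suppose each composite map φ_i(x) = F_i(G(x)) is convex with gradient ∇φ_i(x) = (∇G(x))ᵀ∇F_i(G(x)) that is L_f-Lipschitz in x, let h : ℝ^N → ℝ be convex, and let x* be a minimizer of H(x) = (1/n₁)∑_i F_i(G(x)) + h(x). Fix x, x̃ ∈ ℝ^N and a batch size b₁ ≥ 1, and for an index tuple ι ∈ {1,…,n₁}^{b₁} define u(ι) = (1/b₁)∑_{k=1}^{b₁}[(∇G(x))ᵀ∇F_{ι_k}(G(x)) − (∇G(x̃))ᵀ∇F_{ι_k}(G(x̃))] + ∇f(x̃). Then the uniform average over all tuples ι ∈ {1,…,n₁}^{b₁} satisfies (1/n₁^{b₁})·∑_{ι} ‖u(ι) − ∇f(x)‖² ≤ 4L_f·[(H(x) − H(x*)) + (H(x̃) − H(x*))]. -/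
open scoped RealInnerProductSpace
open Finset

variable {E : Type*} [NormedAddCommGroup E] [InnerProductSpace ℝ E] [CompleteSpace E]

lemma lineDeriv' {φ : E → ℝ} {G : E} (z d : E) (t : ℝ)
    (hg : HasGradientAt φ G (z + t • d)) :
    HasDerivAt (fun s : ℝ => φ (z + s • d)) ⟪G, d⟫ t := by
  have hline : HasDerivAt (fun s : ℝ => z + s • d) d t := by
    simpa using ((hasDerivAt_id t).smul_const d).const_add z
  have := (hasGradientAt_iff_hasFDerivAt.1 hg).comp_hasDerivAt t hline
  simp at this; exact this

lemma descent_lemma {φ : E → ℝ} {g : E → E} (hg : ∀ z, HasGradientAt φ (g z) z)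
    {L : ℝ} (hL : 0 < L) (hlip : ∀ a b, ‖g a - g b‖ ≤ L * ‖a - b‖) (z w : E) :
    φ w ≤ φ z + ⟪g z, w - z⟫ + L / 2 * ‖w - z‖ ^ 2 := by
  set d : E := w - z with hd
  set χ : ℝ → ℝ := fun t => φ (z + t • d) - t * ⟪g z, d⟫ - L / 2 * t ^ 2 * ‖d‖ ^ 2 with hχ
  have hder : ∀ t : ℝ, HasDerivAt χ (⟪g (z + t • d) - g z, d⟫ - L * t * ‖d‖ ^ 2) t := by
    intro t
    have h1 : HasDerivAt (fun s : ℝ => φ (z + s • d)) ⟪g (z + t • d), d⟫ t :=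
      lineDeriv' z d t (hg _)
    have h2 : HasDerivAt (fun s : ℝ => s * ⟪g z, d⟫) ⟪g z, d⟫ t := by
      simpa using (hasDerivAt_id t).mul_const ⟪g z, d⟫
    have h3 : HasDerivAt (fun s : ℝ => L / 2 * s ^ 2 * ‖d‖ ^ 2) (L * t * ‖d‖ ^ 2) t := by
      have := ((hasDerivAt_pow 2 t).const_mul (L / 2)).mul_const (‖d‖ ^ 2)
      exact this.congr_deriv (by simp only [Nat.cast_ofNat, Nat.reduceSub, pow_one]; ring)
    have := (h1.sub h2).sub h3
    exact this.congr_deriv (by rw [inner_sub_left])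
  have hanti : AntitoneOn χ (Set.Icc (0:ℝ) 1) := by
    apply antitoneOn_of_deriv_nonpos (convex_Icc 0 1)
    · have : Differentiable ℝ χ := fun t => (hder t).differentiableAt
      exact this.continuous.continuousOn
    · intro t ht
      exact ((hder t).differentiableAt).differentiableWithinAt
    · intro t ht
      rw [interior_Icc] at ht
      rw [(hder t).deriv]
      have hb : ⟪g (z + t • d) - g z, d⟫ ≤ L * t * ‖d‖ ^ 2 := by
        calc ⟪g (z + t • d) - g z, d⟫ ≤ ‖g (z + t • d) - g z‖ * ‖d‖ := real_inner_le_norm _ _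
        _ ≤ (L * ‖(z + t • d) - z‖) * ‖d‖ := by
            apply mul_le_mul_of_nonneg_right (hlip _ _) (norm_nonneg _)
        _ = L * (|t| * ‖d‖) * ‖d‖ := by rw [add_sub_cancel_left, norm_smul]; norm_num
        _ = L * t * ‖d‖ ^ 2 := by rw [abs_of_pos ht.1]; ring
      linarith
  have h01 := hanti (Set.mem_Icc.2 ⟨le_refl 0, zero_le_one⟩) (Set.mem_Icc.2 ⟨zero_le_one, le_refl 1⟩) zero_le_one
  have e1 : χ 1 = φ w - ⟪g z, d⟫ - L / 2 * ‖d‖ ^ 2 := by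
    simp [hχ, hd]
  have e0 : χ 0 = φ z := by simp [hχ]
  rw [e1, e0] at h01
  linarith

lemma convex_first_order {φ : E → ℝ} (hconv : ConvexOn ℝ Set.univ φ)
    {G : E} (a b : E) (hg : HasGradientAt φ G b) :
    φ b + ⟪G, a - b⟫ ≤ φ a := by
  set p : ℝ → ℝ := fun t => φ (b + t • (a - b)) with hp
  have hpconv : ConvexOn ℝ Set.univ p := by
    have := hconv.comp_affineMap (AffineMap.lineMap b a)
    have hEq : ∀ t : ℝ, (φ ∘ (AffineMap.lineMap b a)) t = p t := by
      intro t; simp [hp, AffineMap.lineMap_apply, add_comm]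
    have hsub := this.subset (Set.subset_univ _) convex_univ
    have hpe : p = φ ∘ ⇑(AffineMap.lineMap b a) := funext fun t => (hEq t).symm
    rw [hpe]
    exact hsub
  have hd : HasDerivAt p ⟪G, a - b⟫ 0 := by
    have := lineDeriv' (φ := φ) b (a - b) 0 (by simpa using hg)
    exact this
  have := hpconv.le_slope_of_hasDerivAt (Set.mem_univ (0:ℝ)) (Set.mem_univ (1:ℝ))
    zero_lt_one hd
  have hs : slope p 0 1 = φ a - φ b := by
    simp [slope_def_field, hp]
  rw [hs] at this
  linarith

lemma cocoercivity {φ : E → ℝ} {g : E → E}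
    (hconv : ConvexOn ℝ Set.univ φ) (hg : ∀ z, HasGradientAt φ (g z) z)
    {L : ℝ} (hL : 0 < L) (hlip : ∀ a b, ‖g a - g b‖ ≤ L * ‖a - b‖) (x y : E) :
    ‖g x - g y‖ ^ 2 ≤ 2 * L * (φ x - φ y - ⟪g y, x - y⟫) := by
  set ψ : E → ℝ := fun z => φ z - ⟪g y, z⟫ with hψ
  set gψ : E → E := fun z => g z - g y with hgψ
  have hgrad : ∀ z, HasGradientAt ψ (gψ z) z := by
    intro z
    rw [hasGradientAt_iff_hasFDerivAt]
    have h1 := hasGradientAt_iff_hasFDerivAt.1 (hg z)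
    have h2 : HasFDerivAt (fun w : E => ⟪g y, w⟫)
        ((InnerProductSpace.toDual ℝ E (g y) : E →L[ℝ] ℝ)) z := by
      exact (InnerProductSpace.toDual ℝ E (g y) : E →L[ℝ] ℝ).hasFDerivAt
    have := h1.sub (by simpa [InnerProductSpace.toDual_apply_apply] using h2)
    refine this.congr_fderiv ?_
    ext v
    simp [gψ, inner_sub_left]
  have hlipψ : ∀ a b, ‖gψ a - gψ b‖ ≤ L * ‖a - b‖ := by
    intro a b; simpa [hgψ, sub_sub_sub_cancel_right] using hlip a b
  set e : E := g x - g y with he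
  set w : E := x - L⁻¹ • e with hw
  have hdes := descent_lemma hgrad hL hlipψ x w
  have hwx : w - x = -(L⁻¹ • e) := by rw [hw]; abel
  have hiner : ⟪gψ x, w - x⟫ = - (L⁻¹ * ‖e‖ ^ 2) := by
    rw [hwx]
    simp [hgψ, ← he, inner_smul_right, real_inner_self_eq_norm_sq]
  have hnorm : ‖w - x‖ ^ 2 = L⁻¹ ^ 2 * ‖e‖ ^ 2 := by
    rw [hwx, norm_neg, norm_smul, Real.norm_eq_abs, abs_inv, abs_of_pos hL]
    ring
  have hlow : ψ y ≤ ψ w := by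
    have := convex_first_order hconv w y (hg y)
    simp only [hψ]
    have : φ y + (⟪g y, w⟫ - ⟪g y, y⟫) ≤ φ w := by
      simpa [inner_sub_right] using convex_first_order hconv w y (hg y)
    linarith
  have key : ψ y ≤ ψ x - ‖e‖ ^ 2 / (2 * L) := by
    have h2 : L / 2 * (L⁻¹ ^ 2 * ‖e‖ ^ 2) - L⁻¹ * ‖e‖ ^ 2 = - (‖e‖ ^ 2 / (2 * L)) := by
      field_simp
      ring
    calc ψ y ≤ ψ w := hlow
      _ ≤ ψ x + ⟪gψ x, w - x⟫ + L / 2 * ‖w - x‖ ^ 2 := hdes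
      _ = ψ x - ‖e‖ ^ 2 / (2 * L) := by rw [hiner, hnorm]; linarith
  have hψx : ψ x = φ x - ⟪g y, x⟫ := rfl
  have hψy : ψ y = φ y - ⟪g y, y⟫ := rfl
  rw [hψx, hψy] at key
  have hin : ⟪g y, x - y⟫ = ⟪g y, x⟫ - ⟪g y, y⟫ := inner_sub_right _ _ _
  have k2 : ‖e‖ ^ 2 / (2 * L) ≤ φ x - φ y - ⟪g y, x - y⟫ := by rw [hin]; linarith
  rw [div_le_iff₀ (by positivity)] at k2
  calc ‖e‖ ^ 2 ≤ (φ x - φ y - ⟪g y, x - y⟫) * (2 * L) := k2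
    _ = 2 * L * (φ x - φ y - ⟪g y, x - y⟫) := by ring

lemma optimality_inner {f h : E → ℝ} {c : ℝ} {xs : E} (x : E)
    (hf : HasDerivAt (fun t : ℝ => f (xs + t • (x - xs))) c 0)
    (hconv : ConvexOn ℝ Set.univ h)
    (hmin : ∀ z, f xs + h xs ≤ f z + h z) :
    -c ≤ h x - h xs := by
  set d : E := x - xs with hd
  set p : ℝ → ℝ := fun t => f (xs + t • d) with hp
  have hder : HasDerivAt p c 0 := hf
  have htend : Filter.Tendsto (slope p 0) (nhdsWithin 0 (Set.Ioi 0)) (nhds c) := by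
    have := hasDerivAt_iff_tendsto_slope.1 hder
    exact this.mono_left (nhdsWithin_mono 0 (fun t ht => ne_of_gt ht))
  have hev : ∀ᶠ t in nhdsWithin 0 (Set.Ioi (0:ℝ)), -(h x - h xs) ≤ slope p 0 t := by
    filter_upwards [Ioo_mem_nhdsGT_of_mem (Set.mem_Ico.2 ⟨le_refl 0, zero_lt_one⟩)] with t ht
    obtain ⟨ht0, ht1⟩ := ht
    have hcomb : xs + t • d = (1 - t) • xs + t • x := by
      rw [hd]; module
    have hh : h (xs + t • d) ≤ (1 - t) * h xs + t * h x := by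
      rw [hcomb]
      exact hconv.2 (Set.mem_univ xs) (Set.mem_univ x) (by linarith) (le_of_lt ht0)
        (by ring) |>.trans (by simp [smul_eq_mul])
    have hm := hmin (xs + t • d)
    have hpt : -(t * (h x - h xs)) ≤ p t - p 0 := by
      have hp0 : p 0 = f xs := by simp [hp]
      have hm' : f xs + h xs ≤ p t + h (xs + t • d) := hm
      nlinarith [hh]
    have hq : -(h x - h xs) ≤ (p t - p 0) / t := by
      rw [le_div_iff₀ ht0]
      nlinarith [hpt]
    simpa [slope_def_field] using hq
  have h2 := ge_of_tendsto htend hev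
  linarith

lemma sum_eval_tuple {n b : ℕ} (f : Fin n → ℝ) (k : Fin b) :
    ∑ ι : Fin b → Fin n, f (ι k) = (n : ℝ) ^ (b - 1) * ∑ i, f i := by
  classical
  rw [← Equiv.sum_comp (Equiv.funSplitAt k (Fin n)).symm (fun ι : Fin b → Fin n => f (ι k))]
  have happ : ∀ p : Fin n × ({a : Fin b // a ≠ k} → Fin n),
      ((Equiv.funSplitAt k (Fin n)).symm p) k = p.1 := by
    intro p; simp [Equiv.funSplitAt, Equiv.piSplitAt]
  simp only [happ]
  rw [Fintype.sum_prod_type]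
  have hcard : Fintype.card {a : Fin b // a ≠ k} = b - 1 := by
    have h1 : Fintype.card {a : Fin b // ¬ (a = k)} = Fintype.card (Fin b) - Fintype.card {a : Fin b // a = k} :=
      Fintype.card_subtype_compl _
    simpa [Fintype.card_subtype_eq] using h1
  simp [Finset.sum_const, Fintype.card_fun, hcard, mul_comm, Finset.mul_sum, Finset.sum_mul]

lemma norm_avg_sq_le {m : ℕ} (hm : 0 < m) (v : Fin m → E) :
    ‖(m : ℝ)⁻¹ • ∑ k, v k‖ ^ 2 ≤ (m : ℝ)⁻¹ * ∑ k, ‖v k‖ ^ 2 := by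
  have hm' : (0:ℝ) < m := by exact_mod_cast hm
  have h1 : ‖∑ k, v k‖ ≤ ∑ k, ‖v k‖ := norm_sum_le _ _
  have h2 : (∑ k, ‖v k‖) ^ 2 ≤ (m:ℝ) * ∑ k, ‖v k‖ ^ 2 := by
    have := sq_sum_le_card_mul_sum_sq (s := (Finset.univ : Finset (Fin m)))
      (f := fun k => ‖v k‖)
    simpa using this
  have h3 : ‖∑ k, v k‖ ^ 2 ≤ (∑ k, ‖v k‖) ^ 2 := by
    have := norm_nonneg (∑ k, v k)
    nlinarith
  rw [norm_smul, Real.norm_eq_abs, abs_inv, abs_of_pos hm', mul_pow]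
  calc ((m:ℝ)⁻¹) ^ 2 * ‖∑ k, v k‖ ^ 2 ≤ ((m:ℝ)⁻¹) ^ 2 * ((m:ℝ) * ∑ k, ‖v k‖ ^ 2) := by
        have := le_trans h3 h2
        have hp : (0:ℝ) ≤ ((m:ℝ)⁻¹) ^ 2 := by positivity
        nlinarith
    _ = (m:ℝ)⁻¹ * ∑ k, ‖v k‖ ^ 2 := by
        field_simp

lemma sum_sub_avg_sq_le {m : ℕ} (hm : 0 < m) (v : Fin m → E) :
    ∑ i, ‖v i - (m:ℝ)⁻¹ • ∑ j, v j‖ ^ 2 ≤ ∑ i, ‖v i‖ ^ 2 := by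
  have hm' : (0:ℝ) < m := by exact_mod_cast hm
  set vb : E := (m:ℝ)⁻¹ • ∑ j, v j with hvb
  have hsum : ∑ i, ⟪v i, vb⟫ = (m:ℝ) * ‖vb‖ ^ 2 := by
    rw [← sum_inner]
    have hsv : (∑ i, v i) = (m:ℝ) • vb := by
      rw [hvb, smul_smul, mul_inv_cancel₀ (ne_of_gt hm'), one_smul]
    rw [hsv, real_inner_smul_left, real_inner_self_eq_norm_sq]
  have expand : ∀ i : Fin m, ‖v i - vb‖ ^ 2 = ‖v i‖ ^ 2 - 2 * ⟪v i, vb⟫ + ‖vb‖ ^ 2 :=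
    fun i => norm_sub_sq_real _ _
  have : ∑ i, ‖v i - vb‖ ^ 2 = (∑ i, ‖v i‖ ^ 2) - (m:ℝ) * ‖vb‖ ^ 2 := by
    simp_rw [expand]
    rw [Finset.sum_add_distrib, Finset.sum_sub_distrib, ← Finset.mul_sum, hsum]
    simp [Finset.sum_const]
    ring
  rw [this]
  nlinarith [sq_nonneg ‖vb‖, hm']



open scoped BigOperators RealInnerProductSpace
open Finset

set_option maxHeartbeats 1000000 in
/-- variance bound for the (exact-inner-function) SVRG-type estimator u(ι). -/
theorem svrg_estimator_variance_bound
    (N M n₁ n₂ b₁ : ℕ) (hn₁ : 0 < n₁) (hn₂ : 0 < n₂) (hb₁ : 1 ≤ b₁)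
    (F : Fin n₁ → En M → ℝ) (Gf : Fin n₂ → En N → En M)
    (hF : ∀ i, ContDiff ℝ 1 (F i)) (hGf : ∀ j, ContDiff ℝ 1 (Gf j))
    (h : En N → ℝ) (hconv : ConvexOn ℝ Set.univ h)
    (L_f : ℝ) (hLf : 0 < L_f)
    -- each composite map φᵢ = Fᵢ ∘ G is convex ...
    (hφconv : ∀ i, ConvexOn ℝ Set.univ (fun x : En N => F i (Gbar Gf x)))
    -- ... with gradient ∇φᵢ(x) = (∇G(x))ᵀ∇Fᵢ(G(x)) ...
    (hφgrad : ∀ (i : Fin n₁) (x : En N),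
      HasGradientAt (fun z : En N => F i (Gbar Gf z))
        (ContinuousLinearMap.adjoint (DGbar Gf x) (gradient (F i) (Gbar Gf x))) x)
    -- ... that is L_f-Lipschitz
    (hφlip : ∀ (i : Fin n₁) (x y : En N),
      ‖ContinuousLinearMap.adjoint (DGbar Gf x) (gradient (F i) (Gbar Gf x))
        - ContinuousLinearMap.adjoint (DGbar Gf y) (gradient (F i) (Gbar Gf y))‖
        ≤ L_f * ‖x - y‖)
    -- x* is a minimizer of H = (1/n₁)∑ᵢ Fᵢ(G(·)) + h
    (xstar : En N)
    (hmin : ∀ z : En N, fComp F Gf xstar + h xstar ≤ fComp F Gf z + h z)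
    -- the fixed points
    (x xt : En N) :
    ((n₁ : ℝ) ^ b₁)⁻¹ * ∑ ι : Fin b₁ → Fin n₁,
        ‖((b₁ : ℝ)⁻¹ • ∑ k : Fin b₁,
            (ContinuousLinearMap.adjoint (DGbar Gf x) (gradient (F (ι k)) (Gbar Gf x))
              - ContinuousLinearMap.adjoint (DGbar Gf xt) (gradient (F (ι k)) (Gbar Gf xt)))
          + gradf F Gf xt) - gradf F Gf x‖ ^ 2
      ≤ 4 * L_f * ((fComp F Gf x + h x - (fComp F Gf xstar + h xstar))
          + (fComp F Gf xt + h xt - (fComp F Gf xstar + h xstar))) := by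

  classical
  have hn₁' : (0:ℝ) < n₁ := by exact_mod_cast hn₁
  have hb₁0 : 0 < b₁ := hb₁
  have hb₁' : (0:ℝ) < b₁ := by exact_mod_cast hb₁0
  set g : Fin n₁ → En N → En N := fun i z =>
    ContinuousLinearMap.adjoint (DGbar Gf z) (gradient (F i) (Gbar Gf z)) with hgdef
  have grad_avg : ∀ z : En N, gradf F Gf z = (n₁ : ℝ)⁻¹ • ∑ i, g i z := by
    intro z
    unfold gradf
    rw [map_smul, map_sum]
  set w : Fin n₁ → En N := fun i => g i x - g i xt with hwdef
  set wb : En N := (n₁ : ℝ)⁻¹ • ∑ j, w j with hwbdef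
  have hwb : gradf F Gf x - gradf F Gf xt = wb := by
    rw [grad_avg, grad_avg, hwbdef, ← smul_sub, ← Finset.sum_sub_distrib]
  -- rewrite each summand
  have hXι : ∀ ι : Fin b₁ → Fin n₁,
      ((b₁:ℝ)⁻¹ • ∑ k, (g (ι k) x - g (ι k) xt) + gradf F Gf xt) - gradf F Gf x
        = (b₁:ℝ)⁻¹ • ∑ k, (w (ι k) - wb) := by
    intro ι
    have hc : (b₁:ℝ)⁻¹ • ∑ _k : Fin b₁, wb = wb := by
      rw [Finset.sum_const, Finset.card_univ, Fintype.card_fin,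
        ← Nat.cast_smul_eq_nsmul ℝ, smul_smul, inv_mul_cancel₀ (ne_of_gt hb₁'), one_smul]
    have hrhs : (b₁:ℝ)⁻¹ • ∑ k, (w (ι k) - wb) = (b₁:ℝ)⁻¹ • ∑ k, w (ι k) - wb := by
      rw [Finset.sum_sub_distrib, smul_sub, hc]
    have hsum : ∑ k : Fin b₁, (g (ι k) x - g (ι k) xt) = ∑ k, w (ι k) := rfl
    rw [hrhs, ← hwb, hsum]
    abel
  have hgoal : ((n₁ : ℝ) ^ b₁)⁻¹ * ∑ ι : Fin b₁ → Fin n₁,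
      ‖((b₁ : ℝ)⁻¹ • ∑ k : Fin b₁, (g (ι k) x - g (ι k) xt) + gradf F Gf xt)
        - gradf F Gf x‖ ^ 2
      = ((n₁ : ℝ) ^ b₁)⁻¹ * ∑ ι : Fin b₁ → Fin n₁,
        ‖(b₁:ℝ)⁻¹ • ∑ k, (w (ι k) - wb)‖ ^ 2 := by
    congr 1
    exact Finset.sum_congr rfl fun ι _ => by rw [hXι ι]
  -- step 1: Jensen per tuple + counting
  have step1 : ((n₁ : ℝ) ^ b₁)⁻¹ * ∑ ι : Fin b₁ → Fin n₁,
      ‖(b₁:ℝ)⁻¹ • ∑ k, (w (ι k) - wb)‖ ^ 2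
      ≤ (n₁ : ℝ)⁻¹ * ∑ i, ‖w i - wb‖ ^ 2 := by
    have hJ : ∑ ι : Fin b₁ → Fin n₁, ‖(b₁:ℝ)⁻¹ • ∑ k, (w (ι k) - wb)‖ ^ 2
        ≤ ∑ ι : Fin b₁ → Fin n₁, ((b₁:ℝ)⁻¹ * ∑ k, ‖w (ι k) - wb‖ ^ 2) := by
      exact Finset.sum_le_sum fun ι _ => norm_avg_sq_le hb₁0 (fun k => w (ι k) - wb)
    have hswap : ∑ ι : Fin b₁ → Fin n₁, ((b₁:ℝ)⁻¹ * ∑ k, ‖w (ι k) - wb‖ ^ 2)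
        = (n₁:ℝ) ^ (b₁ - 1) * ∑ i, ‖w i - wb‖ ^ 2 := by
      rw [← Finset.mul_sum, Finset.sum_comm]
      rw [Finset.sum_congr rfl fun k _ => sum_eval_tuple (fun i => ‖w i - wb‖ ^ 2) k]
      rw [Finset.sum_const, Finset.card_univ, Fintype.card_fin, nsmul_eq_mul,
        ← mul_assoc, inv_mul_cancel₀ (ne_of_gt hb₁'), one_mul]
    have hpow : ((n₁:ℝ) ^ b₁)⁻¹ * (n₁:ℝ) ^ (b₁ - 1) = (n₁:ℝ)⁻¹ := by
      have hb : b₁ = (b₁ - 1) + 1 := (Nat.succ_pred_eq_of_pos hb₁0).symm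
      rw [hb]
      rw [pow_succ]
      have hpw : (0:ℝ) < (n₁:ℝ) ^ (b₁ - 1) := by positivity
      field_simp
      simp
    calc ((n₁ : ℝ) ^ b₁)⁻¹ * ∑ ι : Fin b₁ → Fin n₁, ‖(b₁:ℝ)⁻¹ • ∑ k, (w (ι k) - wb)‖ ^ 2
        ≤ ((n₁ : ℝ) ^ b₁)⁻¹ * ∑ ι : Fin b₁ → Fin n₁, ((b₁:ℝ)⁻¹ * ∑ k, ‖w (ι k) - wb‖ ^ 2) := by
          apply mul_le_mul_of_nonneg_left hJ (by positivity)
      _ = ((n₁ : ℝ) ^ b₁)⁻¹ * ((n₁:ℝ) ^ (b₁ - 1) * ∑ i, ‖w i - wb‖ ^ 2) := by rw [hswap]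
      _ = (n₁ : ℝ)⁻¹ * ∑ i, ‖w i - wb‖ ^ 2 := by rw [← mul_assoc, hpow]
  -- step 2: variance bound
  have step2 : ∑ i, ‖w i - wb‖ ^ 2 ≤ ∑ i, ‖w i‖ ^ 2 := by
    rw [hwbdef]
    exact sum_sub_avg_sq_le hn₁ w
  -- step 3: split each w i
  have step3 : ∀ i : Fin n₁, ‖w i‖ ^ 2
      ≤ 2 * ‖g i x - g i xstar‖ ^ 2 + 2 * ‖g i xt - g i xstar‖ ^ 2 := by
    intro i
    have hsplit : w i = (g i x - g i xstar) - (g i xt - g i xstar) := by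
      rw [hwdef]; abel
    have := norm_sub_le (g i x - g i xstar) (g i xt - g i xstar)
    rw [← hsplit] at this
    nlinarith [this, sq_nonneg (‖g i x - g i xstar‖ - ‖g i xt - g i xstar‖),
      norm_nonneg (w i), norm_nonneg (g i x - g i xstar), norm_nonneg (g i xt - g i xstar)]
  -- co-coercivity
  have coco : ∀ (i : Fin n₁) (z : En N), ‖g i z - g i xstar‖ ^ 2
      ≤ 2 * L_f * (F i (Gbar Gf z) - F i (Gbar Gf xstar) - ⟪g i xstar, z - xstar⟫) := by
    intro i z
    exact cocoercivity (hφconv i) (hφgrad i) hLf (hφlip i) z xstar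
  -- averaged co-coercivity
  have havg : ∀ z : En N, (n₁:ℝ)⁻¹ * ∑ i, (F i (Gbar Gf z) - F i (Gbar Gf xstar)
        - ⟪g i xstar, z - xstar⟫)
      = fComp F Gf z - fComp F Gf xstar - ⟪gradf F Gf xstar, z - xstar⟫ := by
    intro z
    have hin : ⟪gradf F Gf xstar, z - xstar⟫ = (n₁:ℝ)⁻¹ * ∑ i, ⟪g i xstar, z - xstar⟫ := by
      rw [grad_avg xstar, real_inner_smul_left, sum_inner]
    rw [hin]
    unfold fComp
    rw [Finset.sum_sub_distrib, Finset.sum_sub_distrib]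
    ring
  -- optimality of xstar
  have hline : ∀ z : En N, HasDerivAt
      (fun t : ℝ => fComp F Gf (xstar + t • (z - xstar)))
      ⟪gradf F Gf xstar, z - xstar⟫ 0 := by
    intro z
    have hi : ∀ i : Fin n₁, HasDerivAt
        (fun t : ℝ => F i (Gbar Gf (xstar + t • (z - xstar))))
        ⟪g i xstar, z - xstar⟫ 0 := by
      intro i
      exact lineDeriv' xstar (z - xstar) 0 (by simpa using hφgrad i xstar)
    have hsum := HasDerivAt.sum (fun i (_ : i ∈ Finset.univ) => hi i)
    have hmul := hsum.const_mul ((n₁:ℝ)⁻¹)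
    have hin : ⟪gradf F Gf xstar, z - xstar⟫
        = (n₁:ℝ)⁻¹ * ∑ i, ⟪g i xstar, z - xstar⟫ := by
      rw [grad_avg xstar, real_inner_smul_left, sum_inner]
    rw [hin]
    refine hmul.congr_of_eventuallyEq (Filter.Eventually.of_forall fun t => ?_)
    simp [fComp, Finset.sum_apply]
  have hopt : ∀ z : En N,
      -⟪gradf F Gf xstar, z - xstar⟫ ≤ h z - h xstar := by
    intro z
    exact optimality_inner z (hline z) hconv hmin
  -- combine per point
  have keybound : ∀ z : En N, (n₁:ℝ)⁻¹ * ∑ i, ‖g i z - g i xstar‖ ^ 2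
      ≤ 2 * L_f * ((fComp F Gf z + h z) - (fComp F Gf xstar + h xstar)) := by
    intro z
    have h1 : ∑ i, ‖g i z - g i xstar‖ ^ 2
        ≤ ∑ i, 2 * L_f * (F i (Gbar Gf z) - F i (Gbar Gf xstar)
            - ⟪g i xstar, z - xstar⟫) :=
      Finset.sum_le_sum fun i _ => coco i z
    have h2 : (n₁:ℝ)⁻¹ * ∑ i, ‖g i z - g i xstar‖ ^ 2
        ≤ 2 * L_f * (fComp F Gf z - fComp F Gf xstar - ⟪gradf F Gf xstar, z - xstar⟫) := by
      have := mul_le_mul_of_nonneg_left h1 (le_of_lt (inv_pos.2 hn₁'))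
      calc (n₁:ℝ)⁻¹ * ∑ i, ‖g i z - g i xstar‖ ^ 2
          ≤ (n₁:ℝ)⁻¹ * ∑ i, 2 * L_f * (F i (Gbar Gf z) - F i (Gbar Gf xstar)
              - ⟪g i xstar, z - xstar⟫) := this
        _ = 2 * L_f * ((n₁:ℝ)⁻¹ * ∑ i, (F i (Gbar Gf z) - F i (Gbar Gf xstar)
              - ⟪g i xstar, z - xstar⟫)) := by
            rw [← Finset.mul_sum]
            ring
        _ = 2 * L_f * (fComp F Gf z - fComp F Gf xstar
              - ⟪gradf F Gf xstar, z - xstar⟫) := by rw [havg z]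
    have h3 := hopt z
    have h7 : fComp F Gf z - fComp F Gf xstar - ⟪gradf F Gf xstar, z - xstar⟫
        ≤ (fComp F Gf z + h z) - (fComp F Gf xstar + h xstar) := by linarith
    exact h2.trans (mul_le_mul_of_nonneg_left h7 (by positivity))
  -- final assembly
  have final : (n₁:ℝ)⁻¹ * ∑ i, ‖w i‖ ^ 2
      ≤ 4 * L_f * ((fComp F Gf x + h x - (fComp F Gf xstar + h xstar))
          + (fComp F Gf xt + h xt - (fComp F Gf xstar + h xstar))) := by
    have h4 : ∑ i, ‖w i‖ ^ 2 ≤ ∑ i, (2 * ‖g i x - g i xstar‖ ^ 2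
        + 2 * ‖g i xt - g i xstar‖ ^ 2) := Finset.sum_le_sum fun i _ => step3 i
    have h5 : (n₁:ℝ)⁻¹ * ∑ i, (2 * ‖g i x - g i xstar‖ ^ 2 + 2 * ‖g i xt - g i xstar‖ ^ 2)
        = 2 * ((n₁:ℝ)⁻¹ * ∑ i, ‖g i x - g i xstar‖ ^ 2)
          + 2 * ((n₁:ℝ)⁻¹ * ∑ i, ‖g i xt - g i xstar‖ ^ 2) := by
      rw [Finset.sum_add_distrib, ← Finset.mul_sum, ← Finset.mul_sum]
      ring
    have hx' := keybound x
    have hxt' := keybound xt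
    have h6 : (n₁:ℝ)⁻¹ * ∑ i, ‖w i‖ ^ 2
        ≤ (n₁:ℝ)⁻¹ * ∑ i, (2 * ‖g i x - g i xstar‖ ^ 2 + 2 * ‖g i xt - g i xstar‖ ^ 2) :=
      mul_le_mul_of_nonneg_left h4 (le_of_lt (inv_pos.2 hn₁'))
    rw [h5] at h6
    have h8 : 2 * (2 * L_f * ((fComp F Gf x + h x) - (fComp F Gf xstar + h xstar)))
        + 2 * (2 * L_f * ((fComp F Gf xt + h xt) - (fComp F Gf xstar + h xstar)))
        = 4 * L_f * ((fComp F Gf x + h x - (fComp F Gf xstar + h xstar))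
          + (fComp F Gf xt + h xt - (fComp F Gf xstar + h xstar))) := by ring
    linarith [h6, hx', hxt']
  calc ((n₁ : ℝ) ^ b₁)⁻¹ * ∑ ι : Fin b₁ → Fin n₁,
      ‖((b₁ : ℝ)⁻¹ • ∑ k : Fin b₁,
          (ContinuousLinearMap.adjoint (DGbar Gf x) (gradient (F (ι k)) (Gbar Gf x))
            - ContinuousLinearMap.adjoint (DGbar Gf xt) (gradient (F (ι k)) (Gbar Gf xt)))
        + gradf F Gf xt) - gradf F Gf x‖ ^ 2
      = ((n₁ : ℝ) ^ b₁)⁻¹ * ∑ ι : Fin b₁ → Fin n₁,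
        ‖(b₁:ℝ)⁻¹ • ∑ k, (w (ι k) - wb)‖ ^ 2 := hgoal
    _ ≤ (n₁ : ℝ)⁻¹ * ∑ i, ‖w i - wb‖ ^ 2 := step1
    _ ≤ (n₁ : ℝ)⁻¹ * ∑ i, ‖w i‖ ^ 2 :=
        mul_le_mul_of_nonneg_left step2 (le_of_lt (inv_pos.2 hn₁'))
    _ ≤ 4 * L_f * ((fComp F Gf x + h x - (fComp F Gf xstar + h xstar))
          + (fComp F Gf xt + h xt - (fComp F Gf xstar + h xstar))) := final
end

section
/- Assume ‖∇F_i(y)‖ ≤ B_F and ‖∇F_i(y) − ∇F_i(y')‖ ≤ L_F‖y − y'‖ for all y, y' ∈ ℝ^M and all i, ‖∇G_j(x)‖ ≤ B_G and ‖∇G_j(x) − ∇G_j(x')‖ ≤ L_G‖x − x'‖ for all x, x' ∈ ℝ^N and all j (Hilbert–Schmidt norms on linear maps). Fix x, x̃ ∈ ℝ^N, an arbitrary point x* ∈ ℝ^N, batch sizes A, B ≥ 1, and an index i ∈ {1,…,n₁}. Then the uniform average over all pairs of tuples (a, b) ∈ {1,…,n₂}^{A} × {1,…,n₂}^{B} satisfies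 𝔼_{a,b} ‖(D̂(b))ᵀ∇F_i(Ĝ(a)) − (∇G(x))ᵀ∇F_i(G(x))‖² ≤ 16·(B_F²L_G²/B + B_G⁴L_F²/A)·(‖x − x*‖² + ‖x̃ − x*‖²). -/
open scoped BigOperators RealInnerProductSpace
open Finset

noncomputable section
abbrev HS (N M : ℕ) : Type := PiLp 2 (fun _ : Fin N => En M)

def phi {N M : ℕ} : (En N →L[ℝ] En M) →ₗ[ℝ] HS N M where
  toFun T := WithLp.toLp 2 (fun j => T (EuclideanSpace.single j 1))
  map_add' T S := by ext j; simp [HS]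
  map_smul' c T := by ext j; simp [HS]

lemma hsNorm_eq_norm_phi {N M : ℕ} (T : En N →L[ℝ] En M) : hsNorm T = ‖phi T‖ := by
  rw [PiLp.norm_eq_of_L2]; rfl

end
noncomputable section

lemma hsNorm_nonneg {N M : ℕ} (T : En N →L[ℝ] En M) : 0 ≤ hsNorm T :=
  Real.sqrt_nonneg _

set_option maxHeartbeats 1000000 in
lemma norm_adjoint_apply_le {N M : ℕ} (T : En N →L[ℝ] En M) (v : En M) :
    ‖ContinuousLinearMap.adjoint T v‖ ≤ hsNorm T * ‖v‖ := by
  have key : ∀ j : Fin N, (ContinuousLinearMap.adjoint T v) j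
      = ⟪T (EuclideanSpace.single j 1), v⟫ := by
    intro j
    rw [← ContinuousLinearMap.adjoint_inner_right]
    simp [EuclideanSpace.inner_single_left]
  have h1 : ‖ContinuousLinearMap.adjoint T v‖ ^ 2
      = ∑ j : Fin N, ⟪T (EuclideanSpace.single j 1), v⟫ ^ 2 := by
    rw [EuclideanSpace.norm_eq, Real.sq_sqrt (by positivity)]
    refine Finset.sum_congr rfl fun j _ => ?_
    rw [key j, Real.norm_eq_abs, sq_abs]
  have h2 : ‖ContinuousLinearMap.adjoint T v‖ ^ 2 ≤ (hsNorm T * ‖v‖) ^ 2 := by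
    have hsq : hsNorm T ^ 2 = ∑ j : Fin N, ‖T (EuclideanSpace.single j 1)‖ ^ 2 := by
      rw [hsNorm, Real.sq_sqrt (by positivity)]
    rw [h1, mul_pow, hsq, Finset.sum_mul]
    refine Finset.sum_le_sum fun j _ => ?_
    have h3 := abs_real_inner_le_norm (T (EuclideanSpace.single j 1)) v
    calc ⟪T (EuclideanSpace.single j 1), v⟫ ^ 2
        = |⟪T (EuclideanSpace.single j 1), v⟫| ^ 2 := (sq_abs _).symm
      _ ≤ (‖T (EuclideanSpace.single j 1)‖ * ‖v‖) ^ 2 := by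
          gcongr
      _ = ‖T (EuclideanSpace.single j 1)‖ ^ 2 * ‖v‖ ^ 2 := by ring
  nlinarith [norm_nonneg (ContinuousLinearMap.adjoint T v),
    mul_nonneg (hsNorm_nonneg T) (norm_nonneg v)]

noncomputable section
set_option maxHeartbeats 1000000 in
lemma norm_apply_le_hsNorm {N M : ℕ} (T : En N →L[ℝ] En M) (w : En N) :
    ‖T w‖ ≤ hsNorm T * ‖w‖ := by
  have hw : w = ∑ j : Fin N, w j • EuclideanSpace.single j 1 := by
    have := (EuclideanSpace.basisFun (Fin N) ℝ).sum_repr w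
    simpa [EuclideanSpace.basisFun_apply, EuclideanSpace.basisFun_repr] using this.symm
  calc ‖T w‖ = ‖∑ j : Fin N, w j • T (EuclideanSpace.single j 1)‖ := by
        conv_lhs => rw [hw]
        rw [map_sum]
        simp
    _ ≤ ∑ j : Fin N, |w j| * ‖T (EuclideanSpace.single j 1)‖ := by
        refine (norm_sum_le _ _).trans (le_of_eq ?_)
        refine Finset.sum_congr rfl fun j _ => ?_
        rw [norm_smul, Real.norm_eq_abs]
    _ ≤ Real.sqrt (∑ j : Fin N, |w j| ^ 2) *
          Real.sqrt (∑ j : Fin N, ‖T (EuclideanSpace.single j 1)‖ ^ 2) := by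
        have := Finset.sum_mul_sq_le_sq_mul_sq Finset.univ
          (fun j : Fin N => |w j|) (fun j => ‖T (EuclideanSpace.single j 1)‖)
        have h1 : 0 ≤ ∑ j : Fin N, |w j| * ‖T (EuclideanSpace.single j 1)‖ :=
          Finset.sum_nonneg fun j _ => by positivity
        calc ∑ j : Fin N, |w j| * ‖T (EuclideanSpace.single j 1)‖
            = Real.sqrt ((∑ j : Fin N, |w j| * ‖T (EuclideanSpace.single j 1)‖) ^ 2) :=
              (Real.sqrt_sq h1).symm
          _ ≤ Real.sqrt ((∑ j : Fin N, |w j| ^ 2) *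
                ∑ j : Fin N, ‖T (EuclideanSpace.single j 1)‖ ^ 2) := Real.sqrt_le_sqrt this
          _ = _ := Real.sqrt_mul (Finset.sum_nonneg fun j _ => sq_nonneg _) _
    _ = hsNorm T * ‖w‖ := by
        rw [hsNorm, EuclideanSpace.norm_eq, mul_comm]
        congr 1

lemma opNorm_le_hsNorm {N M : ℕ} (T : En N →L[ℝ] En M) : ‖T‖ ≤ hsNorm T :=
  ContinuousLinearMap.opNorm_le_bound T (hsNorm_nonneg T) (norm_apply_le_hsNorm T)
end

noncomputable section
set_option maxHeartbeats 1000000 in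
lemma tuple_sum_sq {E : Type*} [NormedAddCommGroup E] [InnerProductSpace ℝ E] {n₂ : ℕ}
    (Y : Fin n₂ → E) (hsum : ∑ j, Y j = 0) :
    ∀ A : ℕ, (n₂ : ℝ) * ∑ a : Fin A → Fin n₂, ‖∑ k, Y (a k)‖ ^ 2
      = A * (n₂ : ℝ) ^ A * ∑ j, ‖Y j‖ ^ 2 := by
  intro A
  induction A with
  | zero => simp
  | succ A ih =>
    have hEq : ∑ a : Fin (A + 1) → Fin n₂, ‖∑ k, Y (a k)‖ ^ 2
        = ∑ p : Fin n₂ × (Fin A → Fin n₂), ‖Y p.1 + ∑ k, Y (p.2 k)‖ ^ 2 := by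
      rw [← Equiv.sum_comp (Fin.consEquiv (fun _ : Fin (A+1) => Fin n₂))
        (fun a => ‖∑ k, Y (a k)‖ ^ 2)]
      refine Finset.sum_congr rfl fun p _ => ?_
      congr 1
      rw [Fin.sum_univ_succ]
      simp [Fin.consEquiv]
    have hExp : ∀ (v : Fin n₂) (r : Fin A → Fin n₂),
        ‖Y v + ∑ k, Y (r k)‖ ^ 2
          = ‖Y v‖ ^ 2 + 2 * ⟪Y v, ∑ k, Y (r k)⟫ + ‖∑ k, Y (r k)‖ ^ 2 :=
      fun v r => norm_add_sq_real _ _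
    have hsplit : ∑ p : Fin n₂ × (Fin A → Fin n₂), ‖Y p.1 + ∑ k, Y (p.2 k)‖ ^ 2
        = (n₂ : ℝ) ^ A * ∑ j, ‖Y j‖ ^ 2
          + 2 * ⟪∑ j, Y j, ∑ r : Fin A → Fin n₂, ∑ k, Y (r k)⟫
          + (n₂ : ℝ) * ∑ r : Fin A → Fin n₂, ‖∑ k, Y (r k)‖ ^ 2 := by
      rw [Fintype.sum_prod_type]
      simp only [hExp, Finset.sum_add_distrib]
      have h1 : ∑ v : Fin n₂, ∑ _r : Fin A → Fin n₂, ‖Y v‖ ^ 2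
          = (n₂ : ℝ) ^ A * ∑ j, ‖Y j‖ ^ 2 := by
        simp only [Finset.sum_const, Finset.card_univ, Fintype.card_fun, Fintype.card_fin,
          nsmul_eq_mul, Nat.cast_pow]
        rw [← Finset.mul_sum]
      have h2 : ∑ v : Fin n₂, ∑ r : Fin A → Fin n₂, 2 * ⟪Y v, ∑ k, Y (r k)⟫
          = 2 * ⟪∑ j, Y j, ∑ r : Fin A → Fin n₂, ∑ k, Y (r k)⟫ := by
        rw [sum_inner, Finset.mul_sum]
        refine Finset.sum_congr rfl fun v _ => ?_
        rw [inner_sum, Finset.mul_sum]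
      have h3 : ∑ _v : Fin n₂, ∑ r : Fin A → Fin n₂, ‖∑ k, Y (r k)‖ ^ 2
          = (n₂ : ℝ) * ∑ r : Fin A → Fin n₂, ‖∑ k, Y (r k)‖ ^ 2 := by
        simp [Finset.sum_const, Finset.card_univ]
      rw [h1, h2, h3]
    rw [hEq, hsplit, hsum]
    simp only [inner_zero_left, mul_zero, add_zero]
    rw [mul_add, ih]
    push_cast
    ring
end

noncomputable section
set_option maxHeartbeats 1000000 in
lemma sampling_bound {E : Type*} [NormedAddCommGroup E] [InnerProductSpace ℝ E] {n₂ A : ℕ}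
    (hn₂ : 0 < n₂) (hA : 1 ≤ A) (Y : Fin n₂ → E) (hsum : ∑ j, Y j = 0)
    (C : ℝ) (hC : ∀ j, ‖Y j‖ ≤ C) :
    ((n₂ : ℝ) ^ A)⁻¹ * ∑ a : Fin A → Fin n₂, ‖(A : ℝ)⁻¹ • ∑ k, Y (a k)‖ ^ 2 ≤ C ^ 2 / A := by
  have hn2R : (0 : ℝ) < n₂ := by exact_mod_cast hn₂
  have hAR : (0 : ℝ) < A := by exact_mod_cast hA
  have hC0 : 0 ≤ C := le_trans (norm_nonneg (Y ⟨0, hn₂⟩)) (hC _)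
  have hσ : ∑ j, ‖Y j‖ ^ 2 ≤ (n₂ : ℝ) * C ^ 2 := by
    calc ∑ j, ‖Y j‖ ^ 2 ≤ ∑ _j : Fin n₂, C ^ 2 :=
          Finset.sum_le_sum fun j _ => by
            have := hC j; nlinarith [norm_nonneg (Y j)]
      _ = (n₂ : ℝ) * C ^ 2 := by simp [Finset.sum_const, mul_comm]
  have key := tuple_sum_sq Y hsum A
  have hsmul : ∀ a : Fin A → Fin n₂, ‖(A : ℝ)⁻¹ • ∑ k, Y (a k)‖ ^ 2
      = (A : ℝ)⁻¹ ^ 2 * ‖∑ k, Y (a k)‖ ^ 2 := by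
    intro a
    rw [norm_smul, Real.norm_eq_abs, abs_of_nonneg (by positivity), mul_pow]
  simp only [hsmul]
  rw [← Finset.mul_sum]
  have hSS : ∑ a : Fin A → Fin n₂, ‖∑ k, Y (a k)‖ ^ 2
      = (A : ℝ) * (n₂ : ℝ) ^ A * (∑ j, ‖Y j‖ ^ 2) / n₂ := by
    field_simp
    linarith [key]
  rw [hSS]
  have hpow : (0 : ℝ) < (n₂ : ℝ) ^ A := by positivity
  rw [le_div_iff₀ hAR]
  have hσ0 : 0 ≤ ∑ j, ‖Y j‖ ^ 2 := Finset.sum_nonneg fun j _ => sq_nonneg _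
  have expand : ((n₂ : ℝ) ^ A)⁻¹ * ((A : ℝ)⁻¹ ^ 2 *
      ((A : ℝ) * (n₂ : ℝ) ^ A * (∑ j, ‖Y j‖ ^ 2) / n₂)) * (A : ℝ)
      = (∑ j, ‖Y j‖ ^ 2) / n₂ := by
    field_simp
  rw [expand, div_le_iff₀ hn2R]
  nlinarith
end

noncomputable section
set_option maxHeartbeats 1000000

lemma norm_avg_le {E : Type*} [NormedAddCommGroup E] [NormedSpace ℝ E] {n : ℕ} (hn : 0 < n)
    (v : Fin n → E) (C : ℝ) (h : ∀ j, ‖v j‖ ≤ C) : ‖(n : ℝ)⁻¹ • ∑ j, v j‖ ≤ C := by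
  have hnR : (0 : ℝ) < n := by exact_mod_cast hn
  rw [norm_smul, Real.norm_eq_abs, abs_of_nonneg (by positivity)]
  have h1 : ‖∑ j, v j‖ ≤ (n : ℝ) * C := by
    refine (norm_sum_le _ _).trans ?_
    calc ∑ j, ‖v j‖ ≤ ∑ _j : Fin n, C := Finset.sum_le_sum fun j _ => h j
      _ = (n : ℝ) * C := by simp [Finset.sum_const, mul_comm]
  calc (n : ℝ)⁻¹ * ‖∑ j, v j‖ ≤ (n : ℝ)⁻¹ * ((n : ℝ) * C) := by
        gcongr
      _ = C := by field_simp
end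

set_option maxHeartbeats 2000000

/-- mean-squared error bound for the mini-batch estimates
(D̂(b))ᵀ∇Fᵢ(Ĝ(a)) of the composite gradient. -/
theorem minibatch_composite_gradient_mse_bound
    (N M n₁ n₂ A B : ℕ) (hn₁ : 0 < n₁) (hn₂ : 0 < n₂) (hA : 1 ≤ A) (hB : 1 ≤ B)
    (F : Fin n₁ → En M → ℝ) (Gf : Fin n₂ → En N → En M)
    (hF : ∀ i, ContDiff ℝ 1 (F i)) (hGf : ∀ j, ContDiff ℝ 1 (Gf j))
    (B_F B_G L_F L_G : ℝ)
    (hBFpos : 0 < B_F) (hBGpos : 0 < B_G) (hLFpos : 0 < L_F) (hLGpos : 0 < L_G)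
    (hF_bd : ∀ i (y : En M), ‖gradient (F i) y‖ ≤ B_F)
    (hF_lip : ∀ i (y y' : En M), ‖gradient (F i) y - gradient (F i) y'‖ ≤ L_F * ‖y - y'‖)
    (hG_bd : ∀ j (x : En N), hsNorm (fderiv ℝ (Gf j) x) ≤ B_G)
    (hG_lip : ∀ j (x x' : En N),
      hsNorm (fderiv ℝ (Gf j) x - fderiv ℝ (Gf j) x') ≤ L_G * ‖x - x'‖)
    (x xt xstar : En N) (i : Fin n₁) :
    (Fintype.card ((Fin A → Fin n₂) × (Fin B → Fin n₂)) : ℝ)⁻¹ *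
        ∑ ab : (Fin A → Fin n₂) × (Fin B → Fin n₂),
          ‖ContinuousLinearMap.adjoint (Dhat Gf x xt ab.2)
              (gradient (F i) (Ghat Gf x xt ab.1))
            - ContinuousLinearMap.adjoint (DGbar Gf x) (gradient (F i) (Gbar Gf x))‖ ^ 2
      ≤ 16 * (B_F ^ 2 * L_G ^ 2 / B + B_G ^ 4 * L_F ^ 2 / A) *
          (‖x - xstar‖ ^ 2 + ‖xt - xstar‖ ^ 2) := by
  have hn2R : (0 : ℝ) < n₂ := by exact_mod_cast hn₂
  have hAR : (0 : ℝ) < A := by exact_mod_cast hA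
  have hBR : (0 : ℝ) < B := by exact_mod_cast hB
  set d : ℝ := ‖xt - x‖ with hd
  have hd0 : 0 ≤ d := norm_nonneg _
  -- Lipschitz bound for each G_j
  have hGlip1 : ∀ j, ‖Gf j xt - Gf j x‖ ≤ B_G * d := by
    intro j
    refine Convex.norm_image_sub_le_of_norm_fderiv_le
      (fun z _ => ((hGf j).differentiable one_ne_zero).differentiableAt)
      (fun z _ => (opNorm_le_hsNorm _).trans (hG_bd j z)) convex_univ trivial trivial
  -- the sampled vectors
  set Ya : Fin n₂ → En M := fun j => (Gf j xt - Gf j x) - (Gbar Gf xt - Gbar Gf x) with hYa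
  set Yb : Fin n₂ → HS N M := fun j =>
    phi ((fderiv ℝ (Gf j) xt - fderiv ℝ (Gf j) x) - (DGbar Gf xt - DGbar Gf x)) with hYb
  have hGbar_diff : Gbar Gf xt - Gbar Gf x = (n₂ : ℝ)⁻¹ • ∑ j, (Gf j xt - Gf j x) := by
    rw [Gbar, Gbar, ← smul_sub, ← Finset.sum_sub_distrib]
  have hDGbar_diff : DGbar Gf xt - DGbar Gf x
      = (n₂ : ℝ)⁻¹ • ∑ j, (fderiv ℝ (Gf j) xt - fderiv ℝ (Gf j) x) := by
    rw [DGbar, DGbar]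
    conv_rhs => rw [Finset.sum_sub_distrib, smul_sub]
  have hYa_sum : ∑ j, Ya j = 0 := by
    rw [hYa]
    rw [Finset.sum_sub_distrib, Finset.sum_const, Finset.card_univ, Fintype.card_fin,
      hGbar_diff, ← Nat.cast_smul_eq_nsmul ℝ, smul_smul, mul_inv_cancel₀ (ne_of_gt hn2R), one_smul,
      sub_self]
  have hYb_sum : ∑ j, Yb j = 0 := by
    rw [hYb, ← map_sum]
    rw [Finset.sum_sub_distrib, Finset.sum_const, Finset.card_univ, Fintype.card_fin,
      hDGbar_diff, ← Nat.cast_smul_eq_nsmul ℝ, smul_smul, mul_inv_cancel₀ (ne_of_gt hn2R), one_smul,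
      sub_self, map_zero]
  have hGbar_lip : ‖Gbar Gf xt - Gbar Gf x‖ ≤ B_G * d := by
    rw [hGbar_diff]
    exact norm_avg_le hn₂ _ _ hGlip1
  have hYa_bd : ∀ j, ‖Ya j‖ ≤ 2 * B_G * d := by
    intro j
    calc ‖Ya j‖ ≤ ‖Gf j xt - Gf j x‖ + ‖Gbar Gf xt - Gbar Gf x‖ := norm_sub_le _ _
      _ ≤ B_G * d + B_G * d := add_le_add (hGlip1 j) hGbar_lip
      _ = 2 * B_G * d := by ring
  have hDGbar_lip : ‖phi (DGbar Gf xt - DGbar Gf x)‖ ≤ L_G * d := by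
    rw [hDGbar_diff, map_smul, map_sum]
    refine norm_avg_le hn₂ _ _ fun j => ?_
    rw [← hsNorm_eq_norm_phi]
    exact hG_lip j xt x
  have hYb_bd : ∀ j, ‖Yb j‖ ≤ 2 * L_G * d := by
    intro j
    rw [hYb]
    simp only []
    rw [map_sub]
    calc ‖phi (fderiv ℝ (Gf j) xt - fderiv ℝ (Gf j) x) - phi (DGbar Gf xt - DGbar Gf x)‖
        ≤ ‖phi (fderiv ℝ (Gf j) xt - fderiv ℝ (Gf j) x)‖
          + ‖phi (DGbar Gf xt - DGbar Gf x)‖ := norm_sub_le _ _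
      _ ≤ L_G * d + L_G * d := by
          refine add_le_add ?_ hDGbar_lip
          rw [← hsNorm_eq_norm_phi]
          exact hG_lip j xt x
      _ = 2 * L_G * d := by ring
  -- identities for the estimators
  have hGhat : ∀ a : Fin A → Fin n₂,
      Ghat Gf x xt a - Gbar Gf x = -((A : ℝ)⁻¹ • ∑ k, Ya (a k)) := by
    intro a
    rw [hYa, Ghat]
    simp only [Finset.sum_sub_distrib, smul_sub, Finset.sum_const, Finset.card_univ,
      Fintype.card_fin, ← Nat.cast_smul_eq_nsmul ℝ, smul_smul,
      inv_mul_cancel₀ (ne_of_gt hAR), one_smul]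
    abel
  have hDhatCLM : ∀ b : Fin B → Fin n₂,
      Dhat Gf x xt b - DGbar Gf x
        = -((B : ℝ)⁻¹ • ∑ k, ((fderiv ℝ (Gf (b k)) xt - fderiv ℝ (Gf (b k)) x)
            - (DGbar Gf xt - DGbar Gf x))) := by
    intro b
    rw [Dhat]
    simp only [Finset.sum_sub_distrib, smul_sub, Finset.sum_const, Finset.card_univ,
      Fintype.card_fin, ← Nat.cast_smul_eq_nsmul ℝ, smul_smul,
      inv_mul_cancel₀ (ne_of_gt hBR), one_smul]
    abel
  have hDhat : ∀ b : Fin B → Fin n₂,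
      phi (Dhat Gf x xt b - DGbar Gf x) = -((B : ℝ)⁻¹ • ∑ k, Yb (b k)) := by
    intro b
    rw [hDhatCLM b, map_neg, map_smul, map_sum]
  have hDG_bd : hsNorm (DGbar Gf x) ≤ B_G := by
    rw [hsNorm_eq_norm_phi, DGbar, map_smul, map_sum]
    exact norm_avg_le hn₂ _ _ fun j => by
      rw [← hsNorm_eq_norm_phi]; exact hG_bd j x
  -- per-pair bound
  have key_ab : ∀ (a : Fin A → Fin n₂) (b : Fin B → Fin n₂),
      ‖ContinuousLinearMap.adjoint (Dhat Gf x xt b) (gradient (F i) (Ghat Gf x xt a))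
          - ContinuousLinearMap.adjoint (DGbar Gf x) (gradient (F i) (Gbar Gf x))‖ ^ 2
        ≤ 2 * B_F ^ 2 * ‖(B : ℝ)⁻¹ • ∑ k, Yb (b k)‖ ^ 2
          + 2 * B_G ^ 2 * L_F ^ 2 * ‖(A : ℝ)⁻¹ • ∑ k, Ya (a k)‖ ^ 2 := by
    intro a b
    set g₁ : En M := gradient (F i) (Ghat Gf x xt a) with hg₁
    set g₀ : En M := gradient (F i) (Gbar Gf x) with hg₀
    set P : En N := ContinuousLinearMap.adjoint (Dhat Gf x xt b - DGbar Gf x) g₁ with hP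
    set Q : En N := ContinuousLinearMap.adjoint (DGbar Gf x) (g₁ - g₀) with hQ
    have hsplit : ContinuousLinearMap.adjoint (Dhat Gf x xt b) g₁
        - ContinuousLinearMap.adjoint (DGbar Gf x) g₀ = P + Q := by
      rw [hP, hQ, map_sub ContinuousLinearMap.adjoint, ContinuousLinearMap.sub_apply,
        map_sub]
      abel
    rw [hsplit]
    have hPbd : ‖P‖ ≤ ‖(B : ℝ)⁻¹ • ∑ k, Yb (b k)‖ * B_F := by
      refine (norm_adjoint_apply_le _ _).trans ?_
      have h1 : hsNorm (Dhat Gf x xt b - DGbar Gf x) = ‖(B : ℝ)⁻¹ • ∑ k, Yb (b k)‖ := by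
        rw [hsNorm_eq_norm_phi, hDhat b, norm_neg]
      rw [h1]
      exact mul_le_mul_of_nonneg_left (hF_bd i _) (norm_nonneg _)
    have hQbd : ‖Q‖ ≤ B_G * (L_F * ‖(A : ℝ)⁻¹ • ∑ k, Ya (a k)‖) := by
      refine (norm_adjoint_apply_le _ _).trans ?_
      have h2 : ‖g₁ - g₀‖ ≤ L_F * ‖(A : ℝ)⁻¹ • ∑ k, Ya (a k)‖ := by
        have h3 := hF_lip i (Ghat Gf x xt a) (Gbar Gf x)
        rw [← hg₁, ← hg₀] at h3
        refine h3.trans ?_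
        rw [show Ghat Gf x xt a - Gbar Gf x = -((A : ℝ)⁻¹ • ∑ k, Ya (a k)) from hGhat a,
          norm_neg]
      exact mul_le_mul hDG_bd h2 (norm_nonneg _) (le_of_lt hBGpos)
    have htri := norm_add_le P Q
    nlinarith [norm_nonneg P, norm_nonneg Q, norm_nonneg (P + Q),
      norm_nonneg ((B : ℝ)⁻¹ • ∑ k, Yb (b k)), norm_nonneg ((A : ℝ)⁻¹ • ∑ k, Ya (a k)),
      sq_nonneg (‖(B : ℝ)⁻¹ • ∑ k, Yb (b k)‖ * B_F - B_G * (L_F * ‖(A : ℝ)⁻¹ • ∑ k, Ya (a k)‖)),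
      mul_nonneg (norm_nonneg ((B : ℝ)⁻¹ • ∑ k, Yb (b k))) (le_of_lt hBFpos),
      mul_nonneg (le_of_lt hBGpos)
        (mul_nonneg (le_of_lt hLFpos) (norm_nonneg ((A : ℝ)⁻¹ • ∑ k, Ya (a k))))]
  -- assemble
  have hcard : (Fintype.card ((Fin A → Fin n₂) × (Fin B → Fin n₂)) : ℝ)
      = (n₂ : ℝ) ^ A * (n₂ : ℝ) ^ B := by
    simp [Fintype.card_prod, Fintype.card_fun]
  set Sa : ℝ := ∑ a : Fin A → Fin n₂, ‖(A : ℝ)⁻¹ • ∑ k, Ya (a k)‖ ^ 2 with hSa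
  set Sb : ℝ := ∑ b : Fin B → Fin n₂, ‖(B : ℝ)⁻¹ • ∑ k, Yb (b k)‖ ^ 2 with hSb
  have hSa0 : 0 ≤ Sa := Finset.sum_nonneg fun _ _ => sq_nonneg _
  have hSb0 : 0 ≤ Sb := Finset.sum_nonneg fun _ _ => sq_nonneg _
  have hSaB : ((n₂ : ℝ) ^ A)⁻¹ * Sa ≤ (2 * B_G * d) ^ 2 / A :=
    sampling_bound hn₂ hA Ya hYa_sum _ hYa_bd
  have hSbB : ((n₂ : ℝ) ^ B)⁻¹ * Sb ≤ (2 * L_G * d) ^ 2 / B :=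
    sampling_bound hn₂ hB Yb hYb_sum _ hYb_bd
  have hsum_split : ∑ ab : (Fin A → Fin n₂) × (Fin B → Fin n₂),
      (2 * B_F ^ 2 * ‖(B : ℝ)⁻¹ • ∑ k, Yb (ab.2 k)‖ ^ 2
        + 2 * B_G ^ 2 * L_F ^ 2 * ‖(A : ℝ)⁻¹ • ∑ k, Ya (ab.1 k)‖ ^ 2)
      = (n₂ : ℝ) ^ A * (2 * B_F ^ 2 * Sb) + (n₂ : ℝ) ^ B * (2 * B_G ^ 2 * L_F ^ 2 * Sa) := by
    rw [Fintype.sum_prod_type]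
    simp only [Finset.sum_add_distrib, Finset.sum_const, Finset.card_univ, Fintype.card_fun,
      Fintype.card_fin, nsmul_eq_mul, ← Finset.mul_sum]
    rw [hSa, hSb]
    push_cast
    ring
  have hmono : (Fintype.card ((Fin A → Fin n₂) × (Fin B → Fin n₂)) : ℝ)⁻¹ *
        ∑ ab : (Fin A → Fin n₂) × (Fin B → Fin n₂),
          ‖ContinuousLinearMap.adjoint (Dhat Gf x xt ab.2)
              (gradient (F i) (Ghat Gf x xt ab.1))
            - ContinuousLinearMap.adjoint (DGbar Gf x) (gradient (F i) (Gbar Gf x))‖ ^ 2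
      ≤ 2 * B_F ^ 2 * (((n₂ : ℝ) ^ B)⁻¹ * Sb)
        + 2 * B_G ^ 2 * L_F ^ 2 * (((n₂ : ℝ) ^ A)⁻¹ * Sa) := by
    have h1 : ∑ ab : (Fin A → Fin n₂) × (Fin B → Fin n₂),
        ‖ContinuousLinearMap.adjoint (Dhat Gf x xt ab.2)
            (gradient (F i) (Ghat Gf x xt ab.1))
          - ContinuousLinearMap.adjoint (DGbar Gf x) (gradient (F i) (Gbar Gf x))‖ ^ 2
        ≤ (n₂ : ℝ) ^ A * (2 * B_F ^ 2 * Sb) + (n₂ : ℝ) ^ B * (2 * B_G ^ 2 * L_F ^ 2 * Sa) := by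
      rw [← hsum_split]
      exact Finset.sum_le_sum fun ab _ => key_ab ab.1 ab.2
    have hc0 : (0 : ℝ) < (n₂ : ℝ) ^ A * (n₂ : ℝ) ^ B := by positivity
    calc (Fintype.card ((Fin A → Fin n₂) × (Fin B → Fin n₂)) : ℝ)⁻¹ * _
        ≤ (Fintype.card ((Fin A → Fin n₂) × (Fin B → Fin n₂)) : ℝ)⁻¹ *
          ((n₂ : ℝ) ^ A * (2 * B_F ^ 2 * Sb) + (n₂ : ℝ) ^ B * (2 * B_G ^ 2 * L_F ^ 2 * Sa)) := by
          refine mul_le_mul_of_nonneg_left h1 ?_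
          rw [hcard]
          positivity
      _ = 2 * B_F ^ 2 * (((n₂ : ℝ) ^ B)⁻¹ * Sb)
          + 2 * B_G ^ 2 * L_F ^ 2 * (((n₂ : ℝ) ^ A)⁻¹ * Sa) := by
          rw [hcard]
          field_simp
  refine hmono.trans ?_
  have hdsq : d ^ 2 ≤ 2 * (‖x - xstar‖ ^ 2 + ‖xt - xstar‖ ^ 2) := by
    have h1 : d ≤ ‖xt - xstar‖ + ‖x - xstar‖ := by
      rw [hd]
      calc ‖xt - x‖ = ‖(xt - xstar) - (x - xstar)‖ := by abel_nf
        _ ≤ ‖xt - xstar‖ + ‖x - xstar‖ := norm_sub_le _ _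
    nlinarith [mul_le_mul h1 h1 hd0 (le_trans hd0 h1),
      sq_nonneg (‖xt - xstar‖ - ‖x - xstar‖)]
  have hb1 : 2 * B_F ^ 2 * (((n₂ : ℝ) ^ B)⁻¹ * Sb) ≤ 2 * B_F ^ 2 * ((2 * L_G * d) ^ 2 / B) := by
    refine mul_le_mul_of_nonneg_left hSbB (by positivity)
  have hb2 : 2 * B_G ^ 2 * L_F ^ 2 * (((n₂ : ℝ) ^ A)⁻¹ * Sa)
      ≤ 2 * B_G ^ 2 * L_F ^ 2 * ((2 * B_G * d) ^ 2 / A) := by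
    refine mul_le_mul_of_nonneg_left hSaB (by positivity)
  refine (add_le_add hb1 hb2).trans ?_
  have e1 : 2 * B_F ^ 2 * ((2 * L_G * d) ^ 2 / B) = 8 * (B_F ^ 2 * L_G ^ 2 / B) * d ^ 2 := by
    field_simp; ring
  have e2 : 2 * B_G ^ 2 * L_F ^ 2 * ((2 * B_G * d) ^ 2 / A)
      = 8 * (B_G ^ 4 * L_F ^ 2 / A) * d ^ 2 := by
    field_simp; ring
  rw [e1, e2]
  have hp1 : 0 ≤ B_F ^ 2 * L_G ^ 2 / B := by positivity
  have hp2 : 0 ≤ B_G ^ 4 * L_F ^ 2 / A := by positivity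
  nlinarith [mul_le_mul_of_nonneg_left hdsq hp1, mul_le_mul_of_nonneg_left hdsq hp2]
end
end
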